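/- The map (f restricted to C)^{-1} : f[C] → C is Lipschitz with constant L = sqrt(Σ_{n=0}^∞ ((2^{n+1}+6)/(2^{n+1}√(2^{n+1})))²)... i.e. for all η, ξ ∈ 2^ℕ, |g(η) - g(ξ)| ≤ L · ‖f(g(η)) - f(g(ξ))‖_{ℓ²} for a finite constant L independent of η, ξ. -/

import Mathlib

noncomputable abbrev ℓ2 : Type := lp (fun _ : ℕ => ℝ) 2

def b2r (b : Bool) : ℝ := if b then 1 else 0

/-- The canonical parametrization `g : 2^ℕ → ℝ` of the fat Cantor set,
`g η = Σ_n η(n)·(2^{n+1}+6)/4^{n+1}`. -/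
noncomputable def cantorMap (η : ℕ → Bool) : ℝ :=
  ∑' n : ℕ, b2r (η n) * (((2:ℝ)^(n+1) + 6) / 4^(n+1))

/-- The point `f(g(η)) = Σ_n ((1+η(n))/√(2^n))·e_{n,b(n)}` of the curve at `g(η)`. -/
noncomputable def curvePoint (e : ℕ × ℕ → ℓ2) (b : ℕ → ℕ) (η : ℕ → Bool) : ℓ2 :=
  ∑' n : ℕ, ((1 + b2r (η n)) / Real.sqrt (2^n)) • e (n, b n)

lemma b2r_nonneg (x : Bool) : 0 ≤ b2r x := by cases x <;> simp [b2r]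

lemma b2r_le_one (x : Bool) : b2r x ≤ 1 := by cases x <;> simp [b2r]

/-- A sum of orthonormal (basis) vectors with square-summable coefficients converges. -/
lemma hasSum_aux (e : HilbertBasis (ℕ × ℕ) ℝ ℓ2) (b : ℕ → ℕ) (c : ℕ → ℝ)
    (hc : Summable fun n => c n ^ 2) :
    ∃ x : ℓ2, HasSum (fun n => c n • e (n, b n)) x := by
  set ι : ℕ → ℕ × ℕ := fun n => (n, b n) with hιdef
  have hι : Function.Injective ι := fun m n h => congrArg Prod.fst h
  set F : (ℕ × ℕ) → ℝ := fun p => if (p.1, b p.1) = p then c p.1 else 0 with hFdef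
  have hF0 : ∀ p ∉ Set.range ι, F p = 0 := by
    intro p hp
    have : ¬ ((p.1, b p.1) = p) := fun h => hp ⟨p.1, h⟩
    simp [hFdef, this]
  have hFι : ∀ n, F (ι n) = c n := fun n => by simp [hFdef, hιdef]
  have hmem : Memℓp F 2 := by
    apply memℓp_gen
    have hsupp : ∀ p ∉ Set.range ι, ‖F p‖ ^ (2:ENNReal).toReal = 0 := by
      intro p hp
      rw [hF0 p hp]
      simp
    rw [← hι.summable_iff hsupp]
    apply hc.congr
    intro n
    show c n ^ 2 = ‖F (ι n)‖ ^ (2:ENNReal).toReal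
    rw [hFι n, Real.norm_eq_abs,
      show ((2:ENNReal)).toReal = ((2:ℕ):ℝ) by norm_num, Real.rpow_natCast, sq_abs]
  set f : lp (fun _ : ℕ × ℕ => ℝ) 2 := ⟨F, hmem⟩ with hfdef
  have hsum : HasSum (fun i => f i • (e : (ℕ×ℕ) → ℓ2) i) (e.repr.symm f) :=
    e.hasSum_repr_symm f
  have hzero : ∀ p ∉ Set.range ι, f p • (e : (ℕ×ℕ) → ℓ2) p = 0 := by
    intro p hp
    have : f p = 0 := hF0 p hp
    rw [this, zero_smul]
  refine ⟨e.repr.symm f, ?_⟩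
  have := (hι.hasSum_iff hzero).mpr hsum
  have heq : ((fun i => f i • (e : (ℕ×ℕ) → ℓ2) i) ∘ ι) = fun n => c n • e (n, b n) := by
    funext n
    simp only [Function.comp]
    exact congrArg (fun r : ℝ => r • e (n, b n)) (hFι n)
  rwa [heq] at this

lemma summable_sq (η : ℕ → Bool) :
    Summable (fun n => ((1 + b2r (η n)) / Real.sqrt (2^n)) ^ 2) := by
  apply Summable.of_nonneg_of_le (fun n => sq_nonneg _) (fun n => ?_)
    (summable_geometric_two.mul_left 4)
  have h2 : (0:ℝ) < 2 ^ n := by positivity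
  rw [div_pow, Real.sq_sqrt h2.le]
  rw [div_le_iff₀ h2]
  have h1 : (1 + b2r (η n)) ^ 2 ≤ 4 := by
    nlinarith [b2r_nonneg (η n), b2r_le_one (η n)]
  calc (1 + b2r (η n)) ^ 2 ≤ 4 := h1
    _ ≤ 4 * (1/2)^n * 2^n := by
        rw [mul_assoc, ← mul_pow]
        norm_num
  
/-- the inverse of `f` restricted to the fat Cantor set is Lipschitz: there
is a finite constant `L` with `|g(η) - g(ξ)| ≤ L·‖f(g(η)) - f(g(ξ))‖` for all `η, ξ`. -/
theorem inverse_lipschitz (e : HilbertBasis (ℕ × ℕ) ℝ ℓ2) (b : ℕ → ℕ) :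
    ∃ L : ℝ, 0 < L ∧ ∀ η ξ : ℕ → Bool,
      |cantorMap η - cantorMap ξ| ≤ L * ‖curvePoint (⇑e) b η - curvePoint (⇑e) b ξ‖ := by
  refine ⟨2 * Real.sqrt 2, by positivity, fun η ξ => ?_⟩
  set v : ℕ → ℓ2 := fun n => e (n, b n) with hvdef
  have hι : Function.Injective (fun n => (n, b n) : ℕ → ℕ × ℕ) :=
    fun m n h => congrArg Prod.fst h
  have hv : Orthonormal ℝ v := e.orthonormal.comp _ hι
  set d : ℕ → ℝ := fun n => b2r (η n) - b2r (ξ n) with hddef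
  have hd1 : ∀ n, |d n| = d n ^ 2 := by
    intro n; cases hη : η n <;> cases hξ : ξ n <;> simp [hddef, b2r, hη, hξ] <;> norm_num
  have hdle : ∀ n, d n ^ 2 ≤ 1 := by
    intro n; cases hη : η n <;> cases hξ : ξ n <;> simp [hddef, b2r, hη, hξ] <;> norm_num
  -- convergence of the curve points
  obtain ⟨x₁, hx₁⟩ := hasSum_aux e b _ (summable_sq η)
  obtain ⟨x₂, hx₂⟩ := hasSum_aux e b _ (summable_sq ξ)
  have hc1 : curvePoint (⇑e) b η = x₁ := hx₁.tsum_eq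
  have hc2 : curvePoint (⇑e) b ξ = x₂ := hx₂.tsum_eq
  set x : ℓ2 := curvePoint (⇑e) b η - curvePoint (⇑e) b ξ with hxdef
  have hx : HasSum (fun n => (d n / Real.sqrt (2^n)) • v n) x := by
    rw [hxdef, hc1, hc2]
    have := hx₁.sub hx₂
    convert this using 2 with n
    rw [← sub_smul, div_sub_div_same]
    congr 1
    simp [hddef]
  -- inner products with the orthonormal family
  have hinner : ∀ m, (inner ℝ (v m) x : ℝ) = d m / Real.sqrt (2^m) := by
    intro m
    have h1 : HasSum (fun n => (inner ℝ (v m) ((d n / Real.sqrt (2^n)) • v n) : ℝ))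
        (inner ℝ (v m) x : ℝ) := hx.mapL (innerSL ℝ (v m))
    have h2 : (fun n => (inner ℝ (v m) ((d n / Real.sqrt (2^n)) • v n) : ℝ))
        = fun n => if n = m then d m / Real.sqrt (2^m) else 0 := by
      funext n
      rw [real_inner_smul_right]
      rcases eq_or_ne n m with rfl | hnm
      · rw [if_pos rfl, real_inner_self_eq_norm_sq, hv.1 n]
        norm_num
      · rw [hv.2 (Ne.symm hnm), if_neg hnm, mul_zero]
    rw [h2] at h1
    exact h1.unique (hasSum_ite_eq m _)
  -- Bessel
  set S : ℝ := ∑' n, d n ^ 2 * (1/2)^n with hSdef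
  have hterm : ∀ m, ‖(inner ℝ (v m) x : ℝ)‖ ^ 2 = d m ^ 2 * (1/2)^m := by
    intro m
    rw [hinner m, Real.norm_eq_abs, sq_abs, div_pow,
      Real.sq_sqrt (by positivity : (0:ℝ) ≤ 2^m)]
    rw [div_eq_mul_inv, ← inv_pow, ← one_div]
  have hbessel : S ≤ ‖x‖ ^ 2 := by
    have := hv.tsum_inner_products_le x
    calc S = ∑' m, ‖(inner ℝ (v m) x : ℝ)‖ ^ 2 := by
            rw [hSdef]; exact (tsum_congr hterm).symm
      _ ≤ ‖x‖ ^ 2 := this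
  have hSsummable : Summable fun n => d n ^ 2 * (1/2)^n := by
    apply Summable.of_nonneg_of_le (fun n => by positivity) (fun n => ?_)
      summable_geometric_two
    calc d n ^ 2 * (1/2)^n ≤ 1 * (1/2)^n := by
          apply mul_le_mul_of_nonneg_right (hdle n) (by positivity)
      _ = (1/2)^n := one_mul _
  have hS2 : S ≤ 2 := by
    rw [hSdef]
    calc (∑' n, d n ^ 2 * (1/2:ℝ)^n) ≤ ∑' n, (1/2:ℝ)^n := by
          apply Summable.tsum_le_tsum _ hSsummable summable_geometric_two
          intro n
          calc d n ^ 2 * (1/2)^n ≤ 1 * (1/2)^n :=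
                mul_le_mul_of_nonneg_right (hdle n) (by positivity)
            _ = (1/2)^n := one_mul _
      _ = 2 := tsum_geometric_two
  have hSnonneg : 0 ≤ S := tsum_nonneg (fun n => by positivity)
  -- the cantor side
  set c : ℕ → ℝ := fun n => ((2:ℝ)^(n+1) + 6) / 4^(n+1) with hcdef
  have hcpos : ∀ n, 0 ≤ c n := fun n => by positivity
  have hcle : ∀ n, c n ≤ 2 * (1/2)^n := by
    intro n
    rw [hcdef]
    have h4 : (0:ℝ) < 4^(n+1) := by positivity
    rw [div_le_iff₀ h4]
    have : (4:ℝ)^(n+1) = 2^(n+1) * 2^(n+1) := by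
      rw [← mul_pow]; norm_num
    rw [this]
    have h2n : (1/2:ℝ)^n * 2^(n+1) = 2 := by
      rw [pow_succ, ← mul_assoc, ← mul_pow]
      norm_num
    calc (2:ℝ)^(n+1) + 6 ≤ 4 * 2^(n+1) := by
          have : (6:ℝ) ≤ 3 * 2^(n+1) := by
            have : (2:ℝ) ≤ 2^(n+1) := by
              calc (2:ℝ) = 2^1 := (pow_one 2).symm
                _ ≤ 2^(n+1) := pow_le_pow_right₀ (by norm_num) (by omega)
            linarith
          linarith
      _ = 2 * ((1/2)^n * 2^(n+1)) * 2^(n+1) := by rw [h2n]; ring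
      _ = 2 * (1/2)^n * (2^(n+1) * 2^(n+1)) := by ring
  have hsummη : Summable fun n => b2r (η n) * c n := by
    apply Summable.of_nonneg_of_le (fun n => mul_nonneg (b2r_nonneg _) (hcpos n)) (fun n => ?_)
      (summable_geometric_two.mul_left 2)
    calc b2r (η n) * c n ≤ 1 * c n :=
          mul_le_mul_of_nonneg_right (b2r_le_one _) (hcpos n)
      _ = c n := one_mul _
      _ ≤ 2 * (1/2)^n := hcle n
  have hsummξ : Summable fun n => b2r (ξ n) * c n := by
    apply Summable.of_nonneg_of_le (fun n => mul_nonneg (b2r_nonneg _) (hcpos n)) (fun n => ?_)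
      (summable_geometric_two.mul_left 2)
    calc b2r (ξ n) * c n ≤ 1 * c n :=
          mul_le_mul_of_nonneg_right (b2r_le_one _) (hcpos n)
      _ = c n := one_mul _
      _ ≤ 2 * (1/2)^n := hcle n
  have hdiff : cantorMap η - cantorMap ξ = ∑' n, d n * c n := by
    rw [cantorMap, cantorMap, ← Summable.tsum_sub hsummη hsummξ]
    apply tsum_congr
    intro n
    rw [hddef]
    ring
  have hsummd : Summable fun n => d n * c n := by
    apply (hsummη.sub hsummξ).congr
    intro n
    simp only [hddef]
    ring
  have hbound : |cantorMap η - cantorMap ξ| ≤ 2 * S := by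
    rw [hdiff]
    calc |∑' n, d n * c n| ≤ ∑' n, |d n * c n| := by
          have := norm_tsum_le_tsum_norm (f := fun n => d n * c n)
            (by simpa only [Real.norm_eq_abs] using hsummd.abs)
          simpa only [Real.norm_eq_abs] using this
      _ ≤ 2 * S := by
          rw [hSdef, ← tsum_mul_left]
          apply Summable.tsum_le_tsum _ hsummd.abs (by exact hSsummable.mul_left 2)
          intro n
          rw [abs_mul, abs_of_nonneg (hcpos n), hd1 n]
          calc d n ^ 2 * c n ≤ d n ^ 2 * (2 * (1/2)^n) :=
                mul_le_mul_of_nonneg_left (hcle n) (sq_nonneg _)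
            _ = 2 * (d n ^ 2 * (1/2)^n) := by ring
  -- put it together
  have hsqrtS1 : Real.sqrt S ≤ Real.sqrt 2 := Real.sqrt_le_sqrt hS2
  have hsqrtS2 : Real.sqrt S ≤ ‖x‖ := by
    calc Real.sqrt S ≤ Real.sqrt (‖x‖^2) := Real.sqrt_le_sqrt hbessel
      _ = ‖x‖ := Real.sqrt_sq (norm_nonneg x)
  calc |cantorMap η - cantorMap ξ| ≤ 2 * S := hbound
    _ = 2 * (Real.sqrt S * Real.sqrt S) := by rw [Real.mul_self_sqrt hSnonneg]
    _ ≤ 2 * (Real.sqrt 2 * ‖x‖) := by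
        apply mul_le_mul_of_nonneg_left _ (by norm_num)
        exact mul_le_mul hsqrtS1 hsqrtS2 (Real.sqrt_nonneg _) (Real.sqrt_nonneg _)
    _ = 2 * Real.sqrt 2 * ‖x‖ := by ring
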